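/- arXiv:2110.15638 — 2 statements merged into one kernel-verified Lean document; each statement's English description precedes it below -/
import Mathlib

section
/- Let 𝔛 be a complete class of finite groups, G a finite group and N a normal subgroup of G. Then k_𝔛(G/N) ≤ k_𝔛(G); moreover every 𝔛-maximal subgroup of G/N is the image of some 𝔛-maximal subgroup of G under the canonical epimorphism G → G/N. -/
open scoped Pointwise

/-- A class of (finite) groups, given as a property of group types. -/
abbrev GroupClass : Type 1 := ∀ (G : Type) [Group G], Prop

/-- A complete class of finite groups: nonempty, closed under isomorphism,
subgroups, homomorphic images, and extensions. -/
def IsCompleteClass (X : GroupClass) : Prop :=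
  (∃ (G : Type) (inst : Group G), Finite G ∧ @X G inst) ∧
  (∀ (G H : Type) [Group G] [Group H] [Finite G], (G ≃* H) → X G → X H) ∧
  (∀ (G : Type) [Group G] [Finite G], X G → ∀ H : Subgroup G, X ↥H) ∧
  (∀ (G H : Type) [Group G] [Group H] [Finite G] (φ : G →* H),
      Function.Surjective φ → X G → X H) ∧
  (∀ (G : Type) [Group G] [Finite G] (N : Subgroup G) [N.Normal],
      X ↥N → X (G ⧸ N) → X G)

/-- The conjugate `g H g⁻¹` of a subgroup. -/
def conjSub {G : Type} [Group G] (g : G) (H : Subgroup G) : Subgroup G :=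
  H.map (MulAut.conj g).toMonoidHom

/-- The number of conjugacy classes meeting a (conjugation-invariant) set of subgroups. -/
noncomputable def numClasses {G : Type} [Group G] (S : Set (Subgroup G)) : ℕ :=
  Nat.card {C : Set (Subgroup G) // ∃ H ∈ S, C = {K | ∃ g : G, K = conjSub g H}}

/-- An `𝔛`-maximal subgroup: an `𝔛`-subgroup maximal under inclusion among
`𝔛`-subgroups. -/
def IsXMaximal (X : GroupClass) {G : Type} [Group G] (H : Subgroup G) : Prop :=
  X ↥H ∧ ∀ K : Subgroup G, X ↥K → H ≤ K → H = K

/-- `k_𝔛(G)`: the number of conjugacy classes of `𝔛`-maximal subgroups of `G`. -/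
noncomputable def kX (X : GroupClass) (G : Type) [Group G] : ℕ :=
  numClasses {H : Subgroup G | IsXMaximal X H}

section Aux

variable {X : GroupClass}

lemma Xiso (hXc : IsCompleteClass X) {G H : Type} [Group G] [Group H] [Finite G]
    (e : G ≃* H) (h : X G) : X H := hXc.2.1 G H e h

lemma Xsub (hXc : IsCompleteClass X) {G : Type} [Group G] [Finite G] (h : X G)
    (H : Subgroup G) : X ↥H := hXc.2.2.1 G h H

lemma Xsurj (hXc : IsCompleteClass X) {G H : Type} [Group G] [Group H] [Finite G]
    (φ : G →* H) (hs : Function.Surjective φ) (h : X G) : X H := hXc.2.2.2.1 G H φ hs h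

lemma Xext (hXc : IsCompleteClass X) {G : Type} [Group G] [Finite G] (N : Subgroup G)
    [N.Normal] (h1 : X ↥N) (h2 : X (G ⧸ N)) : X G := hXc.2.2.2.2 G N h1 h2

lemma Xtriv (hXc : IsCompleteClass X) (P : Type) [Group P] [Finite P] [Subsingleton P] :
    X P := by
  obtain ⟨G0, inst, fin, hG0⟩ := hXc.1
  letI := inst
  haveI := fin
  haveI : Unique P := ⟨⟨1⟩, fun a => Subsingleton.elim a 1⟩
  exact Xiso hXc (MulEquiv.ofUnique : ↥(⊥ : Subgroup G0) ≃* P) (Xsub hXc hG0 ⊥)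

lemma card_lt_of_ne_top {G : Type} [Group G] [Finite G] {V : Subgroup G} (h : V ≠ ⊤) :
    Nat.card ↥V < Nat.card G := by
  have h1 : 1 < V.index := Subgroup.one_lt_index_of_ne_top h
  have h2 := V.card_mul_index
  have h3 : 0 < Nat.card ↥V := Nat.card_pos
  nlinarith

lemma card_lt_of_lt {G : Type} [Group G] [Finite G] {A N : Subgroup G} (hle : A ≤ N)
    (hne : A ≠ N) : Nat.card ↥A < Nat.card ↥N := by
  rw [← Nat.card_congr (Subgroup.subgroupOfEquivOfLe hle).toEquiv]
  refine card_lt_of_ne_top (V := A.subgroupOf N) fun h => hne (le_antisymm hle ?_)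
  rwa [Subgroup.subgroupOf_eq_top] at h

lemma Xpgroup (hXc : IsCompleteClass X) {p : ℕ} [Fact p.Prime] {C : Type} [Group C] [Finite C]
    (hC : Nat.card C = p) (hXC : X C) :
    ∀ (n : ℕ) (P : Type) [Group P] [Finite P], Nat.card P ≤ n → IsPGroup p P → X P := by
  intro n
  induction n with
  | zero =>
    intro P _ _ hn _
    have := Nat.card_pos (α := P); omega
  | succ n ih =>
    intro P _ _ hn hP
    by_cases hs : Subsingleton P
    · exact Xtriv hXc P
    have hnt : Nontrivial P := not_subsingleton_iff_nontrivial.mp hs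
    have hcent : Nontrivial (Subgroup.center P) := hP.center_nontrivial
    have hPc : IsPGroup p (Subgroup.center P) := hP.to_subgroup _
    have hdvd : p ∣ Nat.card (Subgroup.center P) := by
      obtain ⟨k, hk, hck⟩ := hPc.nontrivial_iff_card.mp hcent
      rw [hck]; exact dvd_pow_self p hk.ne'
    obtain ⟨z, hz⟩ := exists_prime_orderOf_dvd_card' p hdvd
    set Z : Subgroup P := Subgroup.zpowers (z : P) with hZdef
    have hZle : Z ≤ Subgroup.center P := Subgroup.zpowers_le.mpr z.2
    haveI hZn : Z.Normal := by
      constructor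
      intro nn hnn g
      have hc := Subgroup.mem_center_iff.mp (hZle hnn) g
      have : g * nn * g⁻¹ = nn := by rw [hc, mul_inv_cancel_right]
      rwa [this]
    have hcard : Nat.card ↥Z = p := by
      rw [hZdef, Nat.card_zpowers]
      exact (orderOf_injective (Subgroup.center P).subtype
        (Subgroup.subtype_injective _) z).trans hz
    have hXZ : X ↥Z := Xiso hXc (mulEquivOfPrimeCardEq hC hcard) hXC
    have hq : IsPGroup p (P ⧸ Z) := hP.to_quotient Z
    have hcards := Subgroup.card_eq_card_quotient_mul_card_subgroup Z
    have hple : 2 ≤ p := (Fact.out : p.Prime).two_le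
    have hqpos : 0 < Nat.card (P ⧸ Z) := Nat.card_pos
    have hlt : Nat.card (P ⧸ Z) ≤ n := by nlinarith
    exact Xext hXc Z hXZ (ih (P ⧸ Z) hlt hq)

lemma lemA (hXc : IsCompleteClass X) :
    ∀ (n : ℕ) (L : Type) [Group L] [Finite L] (N : Subgroup L) [N.Normal],
      Nat.card L * Nat.card L + Nat.card ↥N ≤ n → X (L ⧸ N) →
      ∃ U : Subgroup L, X ↥U ∧ U ⊔ N = ⊤ := by
  intro n
  induction n with
  | zero =>
    intro L _ _ N _ hn _
    have h1 := Nat.card_pos (α := L)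
    have h2 := Nat.card_pos (α := ↥N)
    omega
  | succ n ih =>
    intro L _ _ N _ hn hXq
    have key : ∀ V : Subgroup L, V ≠ ⊤ → V ⊔ N = ⊤ →
        ∃ U : Subgroup L, X ↥U ∧ U ⊔ N = ⊤ := by
      intro V hV hVsup
      set φ : ↥V →* L ⧸ N := (QuotientGroup.mk' N).comp V.subtype with hφ
      have hrange : φ.range = Subgroup.map (QuotientGroup.mk' N) V := by
        rw [hφ, MonoidHom.range_comp, Subgroup.range_subtype]
      have hmapN : Subgroup.map (QuotientGroup.mk' N) N = ⊥ := by
        rw [eq_bot_iff]; rintro x ⟨y, hy, rfl⟩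
        simpa using (QuotientGroup.eq_one_iff y).mpr hy
      have hmapV : Subgroup.map (QuotientGroup.mk' N) V = ⊤ := by
        have h1 := congrArg (Subgroup.map (QuotientGroup.mk' N)) hVsup
        rwa [Subgroup.map_sup, hmapN, sup_bot_eq,
          Subgroup.map_top_of_surjective _ (QuotientGroup.mk'_surjective N)] at h1
      have hXrange : X ↥φ.range := by
        have h0 : X ↥(⊤ : Subgroup (L ⧸ N)) := Xiso hXc Subgroup.topEquiv.symm hXq
        exact Xiso hXc (MulEquiv.subgroupCongr (hrange.trans hmapV).symm) h0
      have hXquot : X (↥V ⧸ φ.ker) :=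
        Xiso hXc (QuotientGroup.quotientKerEquivRange φ).symm hXrange
      have hVlt : Nat.card ↥V < Nat.card L := card_lt_of_ne_top hV
      have hker : Nat.card ↥φ.ker ≤ Nat.card ↥V := Subgroup.card_le_card_group _
      obtain ⟨U', hXU', hU'sup⟩ := ih ↥V φ.ker (by nlinarith) hXquot
      refine ⟨U'.map V.subtype,
        Xiso hXc (Subgroup.equivMapOfInjective U' V.subtype (Subgroup.subtype_injective V))
          hXU', ?_⟩
      have hkerle : φ.ker.map V.subtype ≤ N := by
        rintro x ⟨y, hy, rfl⟩
        have h1 : φ y = 1 := hy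
        exact (QuotientGroup.eq_one_iff _).mp h1
      have hmapv : Subgroup.map V.subtype ⊤ = V := by
        rw [← MonoidHom.range_eq_map, Subgroup.range_subtype]
      have h4 : Subgroup.map V.subtype U' ⊔ Subgroup.map V.subtype φ.ker = V := by
        rw [← Subgroup.map_sup, hU'sup, hmapv]
      have hVle : V ≤ U'.map V.subtype ⊔ N :=
        le_of_eq h4.symm |>.trans (sup_le_sup_left hkerle _)
      rw [eq_top_iff, ← hVsup]
      exact sup_le hVle le_sup_right
    by_cases hNbot : N = ⊥
    · subst hNbot
      refine ⟨⊤, ?_, by simp⟩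
      have hXL : X L := Xiso hXc (QuotientGroup.quotientBot (G := L)) hXq
      exact Xiso hXc Subgroup.topEquiv.symm hXL
    · obtain ⟨A, ⟨hAbot, hAle, hAnormal⟩, hAmin⟩ :=
        Set.Finite.exists_minimalFor id {B : Subgroup L | B ≠ ⊥ ∧ B ≤ N ∧ B.Normal}
          (Set.toFinite _) ⟨N, hNbot, le_rfl, inferInstance⟩
      haveI := hAnormal
      by_cases hAN : A = N
      · subst hAN
        -- A is a minimal normal subgroup, and A = N
        have hcard2 : 1 < Nat.card ↥A := (Subgroup.one_lt_card_iff_ne_bot _).mpr hAbot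
        set p := (Nat.card ↥A).minFac with hpdef
        haveI hpf : Fact p.Prime := ⟨Nat.minFac_prime (by omega)⟩
        have hpdvd : p ∣ Nat.card ↥A := Nat.minFac_dvd _
        obtain ⟨P⟩ : Nonempty (Sylow p ↥A) := inferInstance
        set P' : Subgroup L := (P : Subgroup ↥A).map A.subtype with hP'def
        have hfrat : Subgroup.normalizer (P' : Set L) ⊔ A = ⊤ := Sylow.normalizer_sup_eq_top P
        by_cases hnorm : Subgroup.normalizer (P' : Set L) = ⊤
        · haveI hP'norm : P'.Normal := Subgroup.normalizer_eq_top_iff.mp hnorm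
          have hP'le : P' ≤ A := Subgroup.map_subtype_le _
          have hP'card : Nat.card ↥P' = p ^ (Nat.card ↥A).factorization p := by
            rw [← Sylow.card_eq_multiplicity P]
            exact (Nat.card_congr
              (Subgroup.equivMapOfInjective _ A.subtype (Subgroup.subtype_injective A)).toEquiv).symm
          have hP'bot : P' ≠ ⊥ := by
            intro h
            have h1 : 0 < (Nat.card ↥A).factorization p :=
              hpf.out.factorization_pos_of_dvd (by omega) hpdvd
            have h2 : Nat.card ↥P' = 1 := by rw [h]; exact Subgroup.card_bot
            rw [hP'card] at h2
            have h3 : p ∣ 1 := h2 ▸ dvd_pow_self p h1.ne'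
            have h4 := Nat.le_of_dvd one_pos h3
            have := hpf.out.two_le
            omega
          have hPA : P' = A := le_antisymm hP'le (hAmin ⟨hP'bot, hP'le, hP'norm⟩ hP'le)
          have hNp : IsPGroup p ↥A := IsPGroup.iff_card.mpr ⟨_, by rw [← hPA, hP'card]⟩
          by_cases hpq : p ∣ Nat.card (L ⧸ A)
          · obtain ⟨x, hx⟩ := exists_prime_orderOf_dvd_card' p hpq
            have hXC : X ↥(Subgroup.zpowers x) := Xsub hXc hXq _
            have hCcard : Nat.card ↥(Subgroup.zpowers x) = p := by
              rw [Nat.card_zpowers, hx]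
            have hXN : X ↥A :=
              Xpgroup hXc hCcard hXC (Nat.card ↥A) ↥A le_rfl hNp
            have hXL : X L := Xext hXc A hXN hXq
            exact ⟨⊤, Xiso hXc Subgroup.topEquiv.symm hXL, by simp⟩
          · have hcop : Nat.Coprime (Nat.card ↥A) A.index := by
              obtain ⟨k, hk⟩ := IsPGroup.iff_card.mp hNp
              rw [hk, Subgroup.index_eq_card]
              exact Nat.Coprime.pow_left k
                ((Nat.Prime.coprime_iff_not_dvd hpf.out).mpr hpq)
            obtain ⟨U, hU⟩ := Subgroup.exists_right_complement'_of_coprime hcop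
            have hsup : U ⊔ A = ⊤ := by rw [sup_comm]; exact hU.sup_eq_top
            set ψ : ↥U →* L ⧸ A := (QuotientGroup.mk' A).comp U.subtype with hψ
            have hinj : Function.Injective ψ := by
              rw [← MonoidHom.ker_eq_bot_iff]
              rw [eq_bot_iff]
              intro y hy
              have h1 : ψ y = 1 := hy
              have h2 : (y : L) ∈ A := (QuotientGroup.eq_one_iff _).mp h1
              have h3 : (y : L) ∈ A ⊓ U := ⟨h2, y.2⟩
              rw [hU.disjoint.eq_bot] at h3
              have : (y : L) = 1 := h3
              simpa [Subgroup.mem_bot] using Subtype.ext this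
            have hsurj : Function.Surjective ψ := by
              intro q
              obtain ⟨x, rfl⟩ := QuotientGroup.mk'_surjective A q
              have hx : x ∈ ((A ⊔ U : Subgroup L) : Set L) := by
                rw [hU.sup_eq_top]; trivial
              rw [Subgroup.normal_mul] at hx
              obtain ⟨a, ha, u, hu, rfl⟩ := hx
              refine ⟨⟨u, hu⟩, ?_⟩
              have h1 : (QuotientGroup.mk' A) a = 1 := (QuotientGroup.eq_one_iff _).mpr ha
              simp [hψ, map_mul, h1]
            exact ⟨U, Xiso hXc (MulEquiv.ofBijective ψ ⟨hinj, hsurj⟩).symm hXq, hsup⟩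
        · exact key (Subgroup.normalizer (P' : Set L)) hnorm hfrat
      · -- A < N : pass to L ⧸ A
        set π := QuotientGroup.mk' A with hπdef
        haveI : (N.map π).Normal :=
          Subgroup.Normal.map inferInstance π (QuotientGroup.mk'_surjective A)
        have hXQq : X ((L ⧸ A) ⧸ N.map π) :=
          Xiso hXc (QuotientGroup.quotientQuotientEquivQuotient A N hAle).symm hXq
        have hQlt : Nat.card (L ⧸ A) < Nat.card L := by
          have h1 := Subgroup.card_eq_card_quotient_mul_card_subgroup A
          have h2 : 1 < Nat.card ↥A := (Subgroup.one_lt_card_iff_ne_bot _).mpr hAbot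
          have h3 : 0 < Nat.card (L ⧸ A) := Nat.card_pos
          nlinarith
        have hWle : Nat.card ↥(N.map π) ≤ Nat.card (L ⧸ A) := Subgroup.card_le_card_group _
        obtain ⟨W, hXW, hWsup⟩ := ih (L ⧸ A) (N.map π) (by nlinarith) hXQq
        set V := W.comap π with hVdef
        have hmapV : V.map π = W :=
          Subgroup.map_comap_eq_self_of_surjective (QuotientGroup.mk'_surjective A) W
        have hAV : A ≤ V := by
          intro a ha
          have h1 : π a = 1 := (QuotientGroup.eq_one_iff _).mpr ha
          show π a ∈ W
          rw [h1]; exact W.one_mem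
        have hVN : V ⊔ N = ⊤ := by
          have h1 : Subgroup.map π (V ⊔ N) = ⊤ := by
            rw [Subgroup.map_sup, hmapV, hWsup]
          have h2 := Subgroup.comap_map_eq π (V ⊔ N)
          rw [h1, Subgroup.comap_top, QuotientGroup.ker_mk'] at h2
          rw [sup_eq_left.mpr (hAV.trans le_sup_left)] at h2
          exact h2.symm
        by_cases hVtop : V = ⊤
        · have hW : W = ⊤ := by
            rw [← hmapV, hVtop, Subgroup.map_top_of_surjective _ (QuotientGroup.mk'_surjective A)]
          have hXLA : X (L ⧸ A) := Xiso hXc Subgroup.topEquiv (hW ▸ hXW)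
          have hAcard : Nat.card ↥A < Nat.card ↥N := card_lt_of_lt hAle hAN
          obtain ⟨U, hXU, hUsup⟩ := ih L A (by omega) hXLA
          refine ⟨U, hXU, ?_⟩
          rw [eq_top_iff, ← hUsup]
          exact sup_le le_sup_left (hAle.trans le_sup_right)
        · exact key V hVtop hVN

lemma exists_Xmax (hXc : IsCompleteClass X) {G : Type} [Group G] [Finite G]
    (U : Subgroup G) (hXU : X ↥U) : ∃ H : Subgroup G, IsXMaximal X H ∧ U ≤ H := by
  obtain ⟨H, ⟨hXH, hUH⟩, hmax⟩ := Set.Finite.exists_maximalFor id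
    {K : Subgroup G | X ↥K ∧ U ≤ K} (Set.toFinite _) ⟨U, hXU, le_rfl⟩
  exact ⟨H, ⟨hXH, fun K hK hHK => le_antisymm hHK (hmax ⟨hK, hUH.trans hHK⟩ hHK)⟩, hUH⟩

lemma surj_part (hXc : IsCompleteClass X) {G : Type} [Group G] [Finite G] (N : Subgroup G)
    [N.Normal] (K : Subgroup (G ⧸ N)) (hK : IsXMaximal X K) :
    ∃ H : Subgroup G, IsXMaximal X H ∧ K = H.map (QuotientGroup.mk' N) := by
  set L := K.comap (QuotientGroup.mk' N) with hLdef
  set φ : ↥L →* G ⧸ N := (QuotientGroup.mk' N).comp L.subtype with hφdef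
  have hLmap : L.map (QuotientGroup.mk' N) = K :=
    Subgroup.map_comap_eq_self_of_surjective (QuotientGroup.mk'_surjective N) K
  have hrange : φ.range = K := by
    rw [hφdef, MonoidHom.range_comp, Subgroup.range_subtype, hLmap]
  have hXq : X (↥L ⧸ φ.ker) :=
    Xiso hXc (QuotientGroup.quotientKerEquivRange φ).symm
      (Xiso hXc (MulEquiv.subgroupCongr hrange.symm) hK.1)
  obtain ⟨U', hXU', hU'sup⟩ :=
    lemA hXc (Nat.card ↥L * Nat.card ↥L + Nat.card ↥φ.ker) ↥L φ.ker le_rfl hXq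
  have hXU : X ↥(U'.map L.subtype) :=
    Xiso hXc (Subgroup.equivMapOfInjective _ _ (Subgroup.subtype_injective L)) hXU'
  have hUK : (U'.map L.subtype).map (QuotientGroup.mk' N) = K := by
    rw [Subgroup.map_map]
    have h1 : Subgroup.map φ (U' ⊔ φ.ker) = Subgroup.map φ ⊤ := by rw [hU'sup]
    rw [Subgroup.map_sup] at h1
    have h2 : Subgroup.map φ φ.ker = ⊥ := by
      rw [eq_bot_iff]; rintro x ⟨y, hy, rfl⟩
      have : φ y = 1 := hy
      simp [this]
    rw [h2, sup_bot_eq, ← MonoidHom.range_eq_map φ] at h1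
    rw [show (QuotientGroup.mk' N).comp L.subtype = φ from hφdef.symm, h1, hrange]
  obtain ⟨H, hHmax, hUH⟩ := exists_Xmax hXc (U'.map L.subtype) hXU
  have hKle : K ≤ H.map (QuotientGroup.mk' N) := by
    rw [← hUK]; exact Subgroup.map_mono hUH
  have hXHm : X ↥(H.map (QuotientGroup.mk' N)) :=
    Xsurj hXc ((QuotientGroup.mk' N).subgroupMap H)
      ((QuotientGroup.mk' N).subgroupMap_surjective H) hHmax.1
  exact ⟨H, hHmax, hK.2 _ hXHm hKle⟩

lemma conjSub_conjSub {G : Type} [Group G] (g h : G) (H : Subgroup G) :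
    conjSub g (conjSub h H) = conjSub (g * h) H := by
  have hcomp : (MulAut.conj g).toMonoidHom.comp (MulAut.conj h).toMonoidHom
      = (MulAut.conj (g * h)).toMonoidHom := by
    ext x
    simp [mul_assoc]
  unfold conjSub
  rw [Subgroup.map_map, hcomp]

lemma conjSub_one {G : Type} [Group G] (H : Subgroup G) : conjSub 1 H = H := by
  ext x; simp [conjSub, Subgroup.mem_map]

lemma map_conjSub {G : Type} [Group G] (N : Subgroup G) [N.Normal] (g : G) (H : Subgroup G) :
    (conjSub g H).map (QuotientGroup.mk' N) =
      conjSub ((QuotientGroup.mk' N) g) (H.map (QuotientGroup.mk' N)) := by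
  have hcomp : (QuotientGroup.mk' N).comp (MulAut.conj g).toMonoidHom
      = ((MulAut.conj ((QuotientGroup.mk' N) g)).toMonoidHom).comp (QuotientGroup.mk' N) := by
    ext x
    simp
  unfold conjSub
  rw [Subgroup.map_map, Subgroup.map_map, hcomp]

lemma cl_eq {G : Type} [Group G] {H K : Subgroup G} (g : G) (h : K = conjSub g H) :
    {K' : Subgroup G | ∃ a : G, K' = conjSub a K} = {K' | ∃ a : G, K' = conjSub a H} := by
  ext K'
  constructor
  · rintro ⟨a, rfl⟩
    exact ⟨a * g, by rw [h, conjSub_conjSub]⟩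
  · rintro ⟨a, rfl⟩
    refine ⟨a * g⁻¹, ?_⟩
    rw [h, conjSub_conjSub, inv_mul_cancel_right]

end Aux

/-- `k_𝔛(G/N) ≤ k_𝔛(G)`, and every `𝔛`-maximal subgroup of `G/N` is the image of an
`𝔛`-maximal subgroup of `G` under the canonical epimorphism `G → G/N`. -/
theorem kX_quotient_le_and_surj (X : GroupClass) (hXc : IsCompleteClass X)
    (G : Type) [Group G] [Finite G] (N : Subgroup G) [N.Normal] :
    kX X (G ⧸ N) ≤ kX X G ∧
    ∀ K : Subgroup (G ⧸ N), IsXMaximal X K →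
      ∃ H : Subgroup G, IsXMaximal X H ∧ K = H.map (QuotientGroup.mk' N) := by
  have hsurj : ∀ K : Subgroup (G ⧸ N), IsXMaximal X K →
      ∃ H : Subgroup G, IsXMaximal X H ∧ K = H.map (QuotientGroup.mk' N) :=
    fun K hK => surj_part hXc N K hK
  refine ⟨?_, hsurj⟩
  unfold kX numClasses
  refine Nat.card_le_card_of_injective (fun c =>
    ⟨{K | ∃ g : G, K = conjSub g (hsurj c.2.choose c.2.choose_spec.1).choose},
      ⟨(hsurj c.2.choose c.2.choose_spec.1).choose,
        (hsurj c.2.choose c.2.choose_spec.1).choose_spec.1, rfl⟩⟩) ?_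
  intro c1 c2 hceq
  have h12 := congrArg Subtype.val hceq
  simp only at h12
  have hH1 := (hsurj c1.2.choose c1.2.choose_spec.1).choose_spec
  have hH2 := (hsurj c2.2.choose c2.2.choose_spec.1).choose_spec
  set H1 := (hsurj c1.2.choose c1.2.choose_spec.1).choose with hH1def
  set H2 := (hsurj c2.2.choose c2.2.choose_spec.1).choose with hH2def
  have hmem : H1 ∈ {K : Subgroup G | ∃ g : G, K = conjSub g H2} := by
    rw [← h12]
    exact ⟨1, (conjSub_one H1).symm⟩
  obtain ⟨g, hg⟩ := hmem
  have hKconj : c1.2.choose = conjSub ((QuotientGroup.mk' N) g) c2.2.choose := by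
    rw [hH1.2, hH2.2, ← map_conjSub, ← hg]
  apply Subtype.ext
  rw [c1.2.choose_spec.2, c2.2.choose_spec.2]
  exact cl_eq _ hKconj
end

section
/- Let G be a group and N a normal subgroup of G that is an internal direct product of nonabelian simple subgroups, and let S be one of these simple factors. Suppose G = KN for some subgroup K of G. Then: (i) N_G(S) = N · N_K(S); (ii) Aut_G(S) = Inn(S) · Aut_K(S). -/
open scoped Pointwise

/-- `N` is the internal direct product of the nonabelian simple subgroups `Ss 0, …,
Ss (n-1)`: the factors are nonabelian simple, they generate `N`, they pairwise commute
elementwise, and each meets the subgroup generated by the others trivially. -/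
def IsInternalDirectProductOfSimples {G : Type} [Group G] (N : Subgroup G)
    (n : ℕ) (Ss : Fin n → Subgroup G) : Prop :=
  (∀ i, Ss i ≤ N) ∧
  (N = ⨆ i, Ss i) ∧
  (∀ i, IsSimpleGroup ↥(Ss i)) ∧
  (∀ i, ∃ x y : ↥(Ss i), x * y ≠ y * x) ∧
  (∀ i j, i ≠ j → ∀ x ∈ Ss i, ∀ y ∈ Ss j, x * y = y * x) ∧
  (∀ i, Ss i ⊓ (⨆ j ∈ ({i}ᶜ : Set (Fin n)), Ss j) = ⊥)

/-- `Aut_H(S)`: the set of automorphisms of `S` induced by conjugation by elements of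
`N_H(S) = H ∩ N_G(S)` (via `s ↦ x⁻¹ s x`). -/
def inducedAuts {G : Type} [Group G] (H S : Subgroup G) : Set (MulAut ↥S) :=
  {σ | ∃ x, x ∈ H ∧ x ∈ Subgroup.normalizer (S : Set G) ∧ ∀ s : ↥S, (σ s : G) = x⁻¹ * (s : G) * x}

/-- Let `N ⊴ G` be an internal direct product of nonabelian simple subgroups, `S` one of
the factors, and `G = KN`. Then (i) `N_G(S) = N ⬝ N_K(S)`; (ii) `Aut_G(S) = Inn(S) ⬝
Aut_K(S)`. -/
theorem normalizer_and_inducedAuts_factorization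
    (G : Type) [Group G] (N : Subgroup G) [N.Normal]
    (n : ℕ) (Ss : Fin n → Subgroup G)
    (hprod : IsInternalDirectProductOfSimples N n Ss)
    (i : Fin n) (S : Subgroup G) (hS : S = Ss i)
    (K : Subgroup G) (hKN : (K : Set G) * (N : Set G) = Set.univ) :
    (Subgroup.normalizer (S : Set G) : Set G) = (N : Set G) * ((K ⊓ Subgroup.normalizer (S : Set G) : Subgroup G) : Set G) ∧
    inducedAuts (⊤ : Subgroup G) S =
      (((MulAut.conj : ↥S →* MulAut ↥S).range : Subgroup (MulAut ↥S)) : Set (MulAut ↥S)) *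
        inducedAuts K S := by
  subst hS
  obtain ⟨hle, hsup, hsimple, hna, hcomm, hint⟩ := hprod
  set S := Ss i with hSdef
  set Z := Subgroup.centralizer (S : Set G) with hZdef
  -- the centralizer of S normalizes S
  have hZle : Z ≤ Subgroup.normalizer (S : Set G) := by
    intro z hz
    rw [Subgroup.mem_normalizer_iff]
    intro h
    constructor
    · intro hh
      have hc : h * z = z * h := Subgroup.mem_centralizer_iff.1 hz h hh
      have : z * h * z⁻¹ = h := by rw [← hc, mul_inv_cancel_right]
      rw [this]; exact hh
    · intro hu
      have hc : (z * h * z⁻¹) * z = z * (z * h * z⁻¹) :=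
        Subgroup.mem_centralizer_iff.1 hz _ hu
      have h1 : (z * h * z⁻¹) * z = z * h := by group
      rw [h1] at hc
      have h2 : z * h * z⁻¹ = h := mul_left_cancel hc.symm
      rw [← h2]; exact hu
  -- the other factors centralize S
  have hSsjZ : ∀ j, j ≠ i → Ss j ≤ Z := by
    intro j hij x hx
    refine Subgroup.mem_centralizer_iff.2 fun h hh => ?_
    exact hcomm i j (fun e => hij e.symm) h hh x hx
  -- N normalizes S
  have hNnorm : N ≤ Subgroup.normalizer (S : Set G) := by
    rw [hsup]
    refine iSup_le fun j => ?_
    by_cases hij : j = i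
    · subst hij; exact Subgroup.le_normalizer
    · exact le_trans (hSsjZ j hij) hZle
  -- decomposition of elements of N as s * z with s ∈ S, z ∈ Z
  have hNdecomp : ∀ m ∈ N, ∃ s ∈ S, ∃ z ∈ Z, m = s * z := by
    set P : Subgroup G :=
      { carrier := {g | ∃ s ∈ S, ∃ z ∈ Z, g = s * z}
        one_mem' := ⟨1, one_mem _, 1, one_mem _, by simp⟩
        mul_mem' := by
          rintro a b ⟨s, hs, z, hz, rfl⟩ ⟨s', hs', z', hz', rfl⟩
          refine ⟨s * s', mul_mem hs hs', z * z', mul_mem hz hz', ?_⟩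
          have hc : s' * z = z * s' := Subgroup.mem_centralizer_iff.1 hz s' hs'
          rw [show s * z * (s' * z') = s * (z * s') * z' by group, ← hc]
          group
        inv_mem' := by
          rintro a ⟨s, hs, z, hz, rfl⟩
          refine ⟨s⁻¹, inv_mem hs, z⁻¹, inv_mem hz, ?_⟩
          have hc : s⁻¹ * z⁻¹ = z⁻¹ * s⁻¹ :=
            Subgroup.mem_centralizer_iff.1 (inv_mem hz) s⁻¹ (inv_mem hs)
          rw [mul_inv_rev, hc] } with hPdef
    have hNP : N ≤ P := by
      rw [hsup]
      refine iSup_le fun j => ?_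
      by_cases hij : j = i
      · subst hij
        intro g hg
        exact ⟨g, hg, 1, one_mem _, (mul_one g).symm⟩
      · intro g hg
        exact ⟨1, one_mem _, g, hSsjZ j hij hg, (one_mul g).symm⟩
    intro m hm
    exact hNP hm
  constructor
  · -- part (i)
    apply Set.Subset.antisymm
    · intro g hg
      have hg' : g ∈ (K : Set G) * (N : Set G) := by rw [hKN]; trivial
      obtain ⟨k, hk, m, hm, rfl⟩ := hg'
      have hgn : k * m ∈ Subgroup.normalizer (S : Set G) := hg
      have hknorm : k ∈ Subgroup.normalizer (S : Set G) := by
        have := mul_mem hgn (inv_mem (hNnorm hm))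
        simpa using this
      refine Set.mem_mul.2 ⟨k * m * k⁻¹, ?_, k, ?_, by group⟩
      · exact ‹N.Normal›.conj_mem m hm k
      · exact Subgroup.mem_inf.2 ⟨hk, hknorm⟩
    · rintro g ⟨m, hm, h, hh, rfl⟩
      exact mul_mem (hNnorm hm) (Subgroup.mem_inf.1 hh).2
  · -- part (ii)
    apply Set.Subset.antisymm
    · rintro σ ⟨x, -, hxn, hx⟩
      have hx' : x ∈ (K : Set G) * (N : Set G) := by rw [hKN]; trivial
      obtain ⟨k, hk, m, hm, rfl⟩ := hx'
      have hknorm : k ∈ Subgroup.normalizer (S : Set G) := by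
        have := mul_mem hxn (inv_mem (hNnorm hm))
        simpa using this
      obtain ⟨s, hs, z, hz, rfl⟩ := hNdecomp m hm
      set a : ↥S := ⟨s, hs⟩ with hadef
      refine Set.mem_mul.2 ⟨MulAut.conj a⁻¹, ?_, MulAut.conj a * σ, ?_, ?_⟩
      · exact SetLike.mem_coe.2 (MonoidHom.mem_range.2 ⟨a⁻¹, rfl⟩)
      · refine ⟨k, hk, hknorm, fun t => ?_⟩
        have htk : k⁻¹ * (t : G) * k ∈ S := by
          have := (Subgroup.mem_normalizer_iff.1 (inv_mem hknorm) (t : G)).1 t.2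
          simpa using this
        have hu : s⁻¹ * (k⁻¹ * (t : G) * k) * s ∈ S :=
          mul_mem (mul_mem (inv_mem hs) htk) hs
        have hcz : (s⁻¹ * (k⁻¹ * (t : G) * k) * s) * z = z * (s⁻¹ * (k⁻¹ * (t : G) * k) * s) :=
          Subgroup.mem_centralizer_iff.1 hz _ hu
        have h1 : ((MulAut.conj a * σ) t : G) = s * ((σ t : G)) * s⁻¹ := by
          simp [MulAut.conj_apply, hadef]
        rw [h1, hx t]
        have key : (k * (s * z))⁻¹ * (t : G) * (k * (s * z)) =
            z⁻¹ * (s⁻¹ * (k⁻¹ * (t : G) * k) * s) * z := by group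
        rw [key]
        have h2 : z⁻¹ * (s⁻¹ * (k⁻¹ * (t : G) * k) * s) * z
            = s⁻¹ * (k⁻¹ * (t : G) * k) * s := by
          rw [show z⁻¹ * (s⁻¹ * (k⁻¹ * (t : G) * k) * s) * z
              = z⁻¹ * ((s⁻¹ * (k⁻¹ * (t : G) * k) * s) * z) by group, hcz]
          group
        rw [h2]
        group
      · rw [← mul_assoc, ← map_mul, inv_mul_cancel, map_one, one_mul]
    · rintro σ hσ
      obtain ⟨ι, hι, κ, hκmem, rfl⟩ := Set.mem_mul.1 hσ
      obtain ⟨a, rfl⟩ := MonoidHom.mem_range.1 (SetLike.mem_coe.1 hι)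
      obtain ⟨y, hyK, hyn, hκ⟩ := hκmem
      refine ⟨y * (a : G)⁻¹, Subgroup.mem_top _,
        mul_mem hyn (inv_mem (Subgroup.le_normalizer a.2)), fun t => ?_⟩
      have h1 : ((MulAut.conj a * κ) t : G) = (a : G) * ((κ t : G)) * (a : G)⁻¹ := by
        simp [MulAut.conj_apply]
      rw [h1, hκ t]
      group
end
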